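/- Let f : D → R be defined on a convex set D ⊆ R². The function (A,B) ↦ tr(f(A,B)(K*) K) on pairs of Hermitian matrices (A,B) ∈ M_n × M_m with σ(A)×σ(B) ⊆ D is convex for every K ∈ M_{m×n} if and only if f is matrix convex of order (n,m). -/

import Mathlib

open Matrix
open scoped ComplexOrder

variable {n m : ℕ}

/-- Spectral projection onto the `i`-th eigenvector of a Hermitian matrix. -/
noncomputable def eigProj {n : ℕ} {A : Matrix (Fin n) (Fin n) ℂ} (hA : A.IsHermitian)
    (i : Fin n) : Matrix (Fin n) (Fin n) ℂ :=
  Matrix.vecMulVec (fun a => hA.eigenvectorBasis i a) (fun b => star (hA.eigenvectorBasis i b))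

/-- The Korányi functional calculus `f(A,B) = ∑_{i,j} f(λ_i, μ_j) P_i ⊗ Q_j`
acting on the tensor product `ℂⁿ ⊗ ℂᵐ`. -/
noncomputable def calc2 (f : ℝ → ℝ → ℝ) {A : Matrix (Fin n) (Fin n) ℂ}
    {B : Matrix (Fin m) (Fin m) ℂ} (hA : A.IsHermitian) (hB : B.IsHermitian) :
    Matrix (Fin n × Fin m) (Fin n × Fin m) ℂ :=
  ∑ i, ∑ j, (f (hA.eigenvalues i) (hB.eigenvalues j) : ℂ) •
    Matrix.of (fun a b => eigProj hA i a.1 b.1 * eigProj hB j a.2 b.2)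

/-- The variant functional calculus `f(A,B)(K) = ∑_{i,j} f(λ_i, μ_j) P_i K Q_j`. -/
noncomputable def calc2v (f : ℝ → ℝ → ℝ) {A : Matrix (Fin n) (Fin n) ℂ}
    {B : Matrix (Fin m) (Fin m) ℂ} (hA : A.IsHermitian) (hB : B.IsHermitian)
    (K : Matrix (Fin n) (Fin m) ℂ) : Matrix (Fin n) (Fin m) ℂ :=
  ∑ i, ∑ j, (f (hA.eigenvalues i) (hB.eigenvalues j) : ℂ) • (eigProj hA i * K * eigProj hB j)

/-- `(A,B)` is in the domain of `f`, i.e. `σ(A) × σ(B) ⊆ D`. -/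
def InDomain (D : Set (ℝ × ℝ)) {A : Matrix (Fin n) (Fin n) ℂ} {B : Matrix (Fin m) (Fin m) ℂ}
    (hA : A.IsHermitian) (hB : B.IsHermitian) : Prop :=
  ∀ i j, (hA.eigenvalues i, hB.eigenvalues j) ∈ D

/-- `f` is matrix convex of order `(n,m)` on `D`. -/
def MatrixConvexOn (n m : ℕ) (D : Set (ℝ × ℝ)) (f : ℝ → ℝ → ℝ) : Prop :=
  ∀ (A B : Matrix (Fin n) (Fin n) ℂ) (C E : Matrix (Fin m) (Fin m) ℂ)
    (hA : A.IsHermitian) (hB : B.IsHermitian) (hC : C.IsHermitian) (hE : E.IsHermitian)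
    (_ : InDomain D hA hC) (_ : InDomain D hB hE)
    (a b : ℝ) (_ : 0 ≤ a) (_ : 0 ≤ b) (_ : a + b = 1)
    (hAB : (a • A + b • B).IsHermitian) (hCE : (a • C + b • E).IsHermitian),
    ((a • calc2 f hA hC + b • calc2 f hB hE) - calc2 f hAB hCE).PosSemidef


section Spectral
variable {k : ℕ} {C : Matrix (Fin k) (Fin k) ℂ}


lemma eigdot (hC : C.IsHermitian) (i j : Fin k) :
    ∑ r, (starRingEnd ℂ) (hC.eigenvectorBasis i r) * hC.eigenvectorBasis j r
      = if i = j then 1 else 0 := by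
  have := (orthonormal_iff_ite.mp hC.eigenvectorBasis.orthonormal) i j
  simpa [PiLp.inner_apply, RCLike.inner_apply, mul_comm] using this

lemma eigProj_mul (hC : C.IsHermitian) (i j : Fin k) :
    eigProj hC i * eigProj hC j = if i = j then eigProj hC i else 0 := by
  ext a b
  simp only [eigProj, Matrix.mul_apply, vecMulVec_apply]
  have : ∑ r, hC.eigenvectorBasis i a * star (hC.eigenvectorBasis i r) *
      (hC.eigenvectorBasis j r * star (hC.eigenvectorBasis j b))
      = (hC.eigenvectorBasis i a * star (hC.eigenvectorBasis j b)) *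
        ∑ r, (starRingEnd ℂ) (hC.eigenvectorBasis i r) * hC.eigenvectorBasis j r := by
    rw [Finset.mul_sum]
    exact Finset.sum_congr rfl fun r _ => by simp only [starRingEnd_apply]; ring
  rw [this, eigdot]
  split
  · subst ‹i = j›; simp [vecMulVec_apply]
  · simp

lemma sum_eigProj (hC : C.IsHermitian) : ∑ j, eigProj hC j = 1 := by
  have hU : (hC.eigenvectorUnitary : Matrix (Fin k) (Fin k) ℂ) *
      star (hC.eigenvectorUnitary : Matrix (Fin k) (Fin k) ℂ) = 1 :=
    Unitary.mul_star_self_of_mem hC.eigenvectorUnitary.2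
  ext a b
  have := congrFun (congrFun hU a) b
  simp only [Matrix.mul_apply, Matrix.star_apply, Matrix.IsHermitian.eigenvectorUnitary_apply] at this
  simpa [eigProj, Matrix.sum_apply, vecMulVec_apply] using this

lemma mul_eigProj (hC : C.IsHermitian) (j : Fin k) :
    C * eigProj hC j = (hC.eigenvalues j : ℂ) • eigProj hC j := by
  ext a b
  simp only [eigProj, Matrix.mul_apply, vecMulVec_apply, Matrix.smul_apply, smul_eq_mul]
  have h := congrFun (hC.mulVec_eigenvectorBasis j) a
  simp only [Matrix.mulVec, dotProduct, Pi.smul_apply] at h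
  have h2 : ∑ x, C a x * (hC.eigenvectorBasis j x * star (hC.eigenvectorBasis j b))
      = (∑ x, C a x * hC.eigenvectorBasis j x) * star (hC.eigenvectorBasis j b) := by
    rw [Finset.sum_mul]
    exact Finset.sum_congr rfl fun r _ => by ring
  rw [h2, h, Complex.real_smul]
  ring

lemma trace_eigProj (hC : C.IsHermitian) (j : Fin k) : (eigProj hC j).trace = 1 := by
  have := eigdot hC j j
  simp at this
  simp only [Matrix.trace, Matrix.diag, eigProj, vecMulVec_apply]
  rw [← this]
  exact Finset.sum_congr rfl fun r _ => by simp only [starRingEnd_apply]; ring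

lemma pow_eigProj (hC : C.IsHermitian) (p : ℕ) :
    C ^ p = ∑ j, ((hC.eigenvalues j : ℂ)) ^ p • eigProj hC j := by
  induction p with
  | zero => simp [sum_eigProj hC]
  | succ p ih =>
    rw [pow_succ', ih, Finset.mul_sum]
    refine Finset.sum_congr rfl fun j _ => ?_
    rw [Matrix.mul_smul, mul_eigProj hC j, smul_smul, ← pow_succ]

lemma aeval_eq (hC : C.IsHermitian) (p : Polynomial ℂ) :
    (Polynomial.aeval C) p = ∑ j, p.eval ((hC.eigenvalues j : ℂ)) • eigProj hC j := by
  rw [Polynomial.aeval_eq_sum_range]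
  have : ∀ j : Fin k, p.eval ((hC.eigenvalues j : ℂ))
      = ∑ i ∈ Finset.range (p.natDegree + 1), p.coeff i * (hC.eigenvalues j : ℂ) ^ i := fun j =>
    Polynomial.eval_eq_sum_range ((hC.eigenvalues j : ℂ))
  simp_rw [this, Finset.sum_smul, mul_smul]
  rw [Finset.sum_comm]
  refine Finset.sum_congr rfl fun i _ => ?_
  rw [pow_eigProj hC i, Finset.smul_sum]

lemma transpose_aeval (hC : C.IsHermitian) (p : Polynomial ℂ) :
    ((Polynomial.aeval C) p)ᵀ = (Polynomial.aeval Cᵀ) p := by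
  rw [Polynomial.aeval_eq_sum_range, Polynomial.aeval_eq_sum_range, Matrix.transpose_sum]
  exact Finset.sum_congr rfl fun i _ => by rw [Matrix.transpose_smul, Matrix.transpose_pow]

lemma spec_transpose (hC : C.IsHermitian) (g : ℝ → ℂ) :
    ∑ j, g (hC.eigenvalues j) • (eigProj hC j)ᵀ
      = ∑ j, g (hC.transpose.eigenvalues j) • eigProj hC.transpose j := by
  classical
  set s : Finset ℝ := (Finset.image hC.eigenvalues Finset.univ) ∪
    (Finset.image hC.transpose.eigenvalues Finset.univ) with hs
  have hinj : Set.InjOn (fun t : ℝ => (t : ℂ)) s := Complex.ofReal_injective.injOn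
  set p : Polynomial ℂ := Lagrange.interpolate s (fun t : ℝ => (t : ℂ)) (fun t => g t) with hp
  have hev : ∀ t : ℝ, t ∈ s → p.eval (t : ℂ) = g t := fun t ht =>
    Lagrange.eval_interpolate_at_node _ hinj ht
  have h1 : ∑ j, g (hC.eigenvalues j) • eigProj hC j = (Polynomial.aeval C) p := by
    rw [aeval_eq hC p]
    refine Finset.sum_congr rfl fun j _ => ?_
    rw [hev (hC.eigenvalues j) (Finset.mem_union_left _ (Finset.mem_image_of_mem _ (Finset.mem_univ j)))]
  have h2 : ∑ j, g (hC.transpose.eigenvalues j) • eigProj hC.transpose j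
      = (Polynomial.aeval Cᵀ) p := by
    rw [aeval_eq hC.transpose p]
    refine Finset.sum_congr rfl fun j _ => ?_
    rw [hev (hC.transpose.eigenvalues j)
      (Finset.mem_union_right _ (Finset.mem_image_of_mem _ (Finset.mem_univ j)))]
  simp_rw [← Matrix.transpose_smul]
  rw [← Matrix.transpose_sum, h1, h2, transpose_aeval hC p]

lemma evt (hC : C.IsHermitian) (j : Fin k) :
    ∃ i, hC.transpose.eigenvalues j = hC.eigenvalues i := by
  by_contra hcon
  push_neg at hcon
  have hspec := spec_transpose hC (fun t => if t = hC.transpose.eigenvalues j then (1:ℂ) else 0)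
  have hl : ∑ i, (if hC.eigenvalues i = hC.transpose.eigenvalues j then (1:ℂ) else 0) •
      (eigProj hC i)ᵀ = 0 := by
    refine Finset.sum_eq_zero fun i _ => ?_
    rw [if_neg (fun h => hcon i h.symm), zero_smul]
  rw [hl] at hspec
  have htr := congrArg Matrix.trace hspec.symm
  rw [Matrix.trace_zero, Matrix.trace_sum] at htr
  simp_rw [Matrix.trace_smul, trace_eigProj hC.transpose, smul_eq_mul, mul_one] at htr
  have hre := congrArg Complex.re htr
  rw [Complex.re_sum] at hre
  simp only [apply_ite Complex.re, Complex.one_re, Complex.zero_re, Complex.zero_re] at hre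
  have hterm := (Finset.sum_eq_zero_iff_of_nonneg
    (fun i _ => by split <;> norm_num)).mp hre j (Finset.mem_univ j)
  rw [if_pos rfl] at hterm
  exact one_ne_zero hterm

end Spectral

noncomputable def vecOf (K : Matrix (Fin m) (Fin n) ℂ) : (Fin n × Fin m) → ℂ := fun a => Kᴴ a.1 a.2

lemma sum_mulVec' {ι N : Type*} [Fintype N] [DecidableEq N] (s : Finset ι)
    (M : ι → Matrix N N ℂ) (x : N → ℂ) :
    (∑ i ∈ s, M i).mulVec x = ∑ i ∈ s, (M i).mulVec x := by
  funext a
  simp only [Matrix.mulVec, dotProduct, Finset.sum_apply, Matrix.sum_apply,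
    Finset.sum_mul]
  exact Finset.sum_comm

lemma dotProduct_sum' {ι N : Type*} [Fintype N] (s : Finset ι)
    (v : N → ℂ) (w : ι → N → ℂ) :
    v ⬝ᵥ (∑ i ∈ s, w i) = ∑ i ∈ s, v ⬝ᵥ w i := by
  simp only [dotProduct, Finset.sum_apply, Finset.mul_sum]
  exact Finset.sum_comm

lemma bridge (P : Matrix (Fin n) (Fin n) ℂ) (G : Matrix (Fin m) (Fin m) ℂ)
    (K : Matrix (Fin m) (Fin n) ℂ) :
    (P * Kᴴ * G * K).trace =
      star (vecOf K) ⬝ᵥ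
        (Matrix.of fun a b : Fin n × Fin m => P a.1 b.1 * Gᵀ a.2 b.2).mulVec (vecOf K) := by
  have hM : ∀ p r, (P * Kᴴ * G) p r = ∑ q, ∑ s, P p q * Kᴴ q s * G s r := by
    intro p r
    calc (P * Kᴴ * G) p r = ∑ s, (∑ q, P p q * Kᴴ q s) * G s r := by
          simp [Matrix.mul_apply]
      _ = ∑ s, ∑ q, P p q * Kᴴ q s * G s r := by simp_rw [Finset.sum_mul]
      _ = ∑ q, ∑ s, P p q * Kᴴ q s * G s r := Finset.sum_comm
  have hL : (P * Kᴴ * G * K).trace = ∑ p, ∑ r, (P * Kᴴ * G) p r * K r p := by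
    simp [Matrix.trace, Matrix.mul_apply, Matrix.diag]
  have hR : star (vecOf K) ⬝ᵥ
      (Matrix.of fun a b : Fin n × Fin m => P a.1 b.1 * Gᵀ a.2 b.2).mulVec (vecOf K)
      = ∑ p, ∑ r, K r p * (∑ q, ∑ s, P p q * Kᴴ q s * G s r) := by
    simp only [dotProduct, Matrix.mulVec, Matrix.of_apply, vecOf, Pi.star_apply,
      Matrix.conjTranspose_apply, Matrix.transpose_apply, star_star, Fintype.sum_prod_type,
      Finset.mul_sum]
    exact Finset.sum_congr rfl fun p _ => Finset.sum_congr rfl fun r _ =>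
      Finset.sum_congr rfl fun q _ => Finset.sum_congr rfl fun s _ => by ring
  rw [hL, hR]
  exact Finset.sum_congr rfl fun p _ => Finset.sum_congr rfl fun r _ => by rw [hM p r]; ring

lemma calc2v_eq (f : ℝ → ℝ → ℝ) {A : Matrix (Fin n) (Fin n) ℂ}
    {C : Matrix (Fin m) (Fin m) ℂ} (hA : A.IsHermitian) (hC : C.IsHermitian)
    (K' : Matrix (Fin n) (Fin m) ℂ) :
    calc2v f hA hC K' = ∑ i, eigProj hA i * K' *
      (∑ j, (f (hA.eigenvalues i) (hC.eigenvalues j) : ℂ) • eigProj hC j) := by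
  unfold calc2v
  refine Finset.sum_congr rfl fun i _ => ?_
  rw [Matrix.mul_sum]
  exact Finset.sum_congr rfl fun j _ => by rw [Matrix.mul_smul]

lemma calc2_eq (f : ℝ → ℝ → ℝ) {A : Matrix (Fin n) (Fin n) ℂ}
    {C : Matrix (Fin m) (Fin m) ℂ} (hA : A.IsHermitian) (hC : C.IsHermitian) :
    calc2 f hA hC = ∑ i, Matrix.of (fun a b : Fin n × Fin m => eigProj hA i a.1 b.1 *
      (∑ j, (f (hA.eigenvalues i) (hC.eigenvalues j) : ℂ) • eigProj hC j) a.2 b.2) := by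
  unfold calc2
  refine Finset.sum_congr rfl fun i _ => ?_
  ext a b
  simp only [Matrix.sum_apply, Matrix.smul_apply, Matrix.of_apply, smul_eq_mul, Finset.mul_sum]
  exact Finset.sum_congr rfl fun j _ => by ring


lemma core (f : ℝ → ℝ → ℝ) {A : Matrix (Fin n) (Fin n) ℂ}
    {C : Matrix (Fin m) (Fin m) ℂ} (hA : A.IsHermitian) (hC : C.IsHermitian)
    (K : Matrix (Fin m) (Fin n) ℂ) :
    (calc2v f hA hC Kᴴ * K).trace =
      star (vecOf K) ⬝ᵥ (calc2 f hA hC.transpose).mulVec (vecOf K) := by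
  rw [calc2v_eq, Matrix.sum_mul, Matrix.trace_sum, calc2_eq, sum_mulVec', dotProduct_sum']
  refine Finset.sum_congr rfl fun i _ => ?_
  rw [bridge]
  have hsp : (∑ j, (f (hA.eigenvalues i) (hC.eigenvalues j) : ℂ) • eigProj hC j)ᵀ
      = ∑ j, (f (hA.eigenvalues i) (hC.transpose.eigenvalues j) : ℂ) • eigProj hC.transpose j := by
    rw [Matrix.transpose_sum]
    simp_rw [Matrix.transpose_smul]
    exact spec_transpose hC (fun t => ((f (hA.eigenvalues i) t : ℝ) : ℂ))
  rw [hsp]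

lemma calc2_congr (f : ℝ → ℝ → ℝ) {A A' : Matrix (Fin n) (Fin n) ℂ}
    {C C' : Matrix (Fin m) (Fin m) ℂ} (hA : A.IsHermitian) (hC : C.IsHermitian)
    (hA' : A'.IsHermitian) (hC' : C'.IsHermitian) (h1 : A = A') (h2 : C = C') :
    calc2 f hA hC = calc2 f hA' hC' := by subst h1; subst h2; rfl

lemma eigProj_star {k : ℕ} {C : Matrix (Fin k) (Fin k) ℂ} (hC : C.IsHermitian) (j : Fin k)
    (a b : Fin k) : (starRingEnd ℂ) (eigProj hC j b a) = eigProj hC j a b := by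
  simp only [eigProj, vecMulVec_apply, starRingEnd_apply, star_mul', star_star]
  ring

lemma calc2_herm (f : ℝ → ℝ → ℝ) {A : Matrix (Fin n) (Fin n) ℂ}
    {C : Matrix (Fin m) (Fin m) ℂ} (hA : A.IsHermitian) (hC : C.IsHermitian) :
    (calc2 f hA hC).IsHermitian := by
  unfold Matrix.IsHermitian
  ext a b
  simp only [calc2, Matrix.conjTranspose_apply, Matrix.sum_apply, Matrix.smul_apply,
    Matrix.of_apply, smul_eq_mul, star_sum, star_mul', Complex.star_def, Complex.conj_ofReal]
  refine Finset.sum_congr rfl fun i _ => Finset.sum_congr rfl fun j _ => ?_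
  rw [eigProj_star, eigProj_star]

lemma quad_comb (a b : ℝ) (M1 M2 M3 : Matrix (Fin n × Fin m) (Fin n × Fin m) ℂ)
    (x : Fin n × Fin m → ℂ) :
    star x ⬝ᵥ ((a • M1 + b • M2 - M3).mulVec x) =
      (a : ℂ) * (star x ⬝ᵥ M1.mulVec x) + (b : ℂ) * (star x ⬝ᵥ M2.mulVec x)
        - star x ⬝ᵥ M3.mulVec x := by
  rw [Matrix.sub_mulVec, Matrix.add_mulVec, Matrix.smul_mulVec, Matrix.smul_mulVec,
    dotProduct_sub, dotProduct_add, dotProduct_smul, dotProduct_smul, Complex.real_smul,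
    Complex.real_smul]

lemma dom_transfer {D : Set (ℝ × ℝ)} {A : Matrix (Fin n) (Fin n) ℂ}
    {C : Matrix (Fin m) (Fin m) ℂ} {hA : A.IsHermitian} {hC : C.IsHermitian}
    (h : InDomain D hA hC) : InDomain D hA hC.transpose := by
  intro i j
  obtain ⟨i0, h0⟩ := evt hC j
  rw [h0]
  exact h i i0

/-- The map `(A,B) ↦ tr f(A,B)(K*) K` is convex for every `K ∈ M_{m×n}` if and only if
`f` is matrix convex of order `(n,m)`. -/
theorem trace_convex_iff_matrix_convex (D : Set (ℝ × ℝ)) (hD : Convex ℝ D)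
    (f : ℝ → ℝ → ℝ) :
    (∀ (K : Matrix (Fin m) (Fin n) ℂ)
      (A B : Matrix (Fin n) (Fin n) ℂ) (C E : Matrix (Fin m) (Fin m) ℂ)
      (hA : A.IsHermitian) (hB : B.IsHermitian) (hC : C.IsHermitian) (hE : E.IsHermitian)
      (_ : InDomain D hA hC) (_ : InDomain D hB hE)
      (a b : ℝ) (_ : 0 ≤ a) (_ : 0 ≤ b) (_ : a + b = 1)
      (hAB : (a • A + b • B).IsHermitian) (hCE : (a • C + b • E).IsHermitian),
      (calc2v f hAB hCE Kᴴ * K).trace ≤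
        (a : ℂ) * (calc2v f hA hC Kᴴ * K).trace + (b : ℂ) * (calc2v f hB hE Kᴴ * K).trace)
    ↔ MatrixConvexOn n m D f := by
  constructor
  · intro h A B C E hA hB hC hE hdAC hdBE a b ha hb hab hAB hCE
    have hCEt : (a • Cᵀ + b • Eᵀ).IsHermitian := by
      rw [← Matrix.transpose_smul, ← Matrix.transpose_smul, ← Matrix.transpose_add]
      exact hCE.transpose
    refine posSemidef_iff_dotProduct_mulVec.mpr ⟨?_, ?_⟩
    · have h1 : (a • calc2 f hA hC).IsHermitian := by
        unfold Matrix.IsHermitian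
        rw [Matrix.conjTranspose_smul, star_trivial, calc2_herm f hA hC]
      have h2 : (b • calc2 f hB hE).IsHermitian := by
        unfold Matrix.IsHermitian
        rw [Matrix.conjTranspose_smul, star_trivial, calc2_herm f hB hE]
      exact (h1.add h2).sub (calc2_herm f hAB hCE)
    · intro x
      set K : Matrix (Fin m) (Fin n) ℂ := Matrix.of fun r p => star (x (p, r)) with hK
      have hx : vecOf K = x := by
        funext c
        simp [vecOf, Matrix.conjTranspose_apply, hK]
      have hineq := h K A B Cᵀ Eᵀ hA hB hC.transpose hE.transpose
        (dom_transfer hdAC) (dom_transfer hdBE) a b ha hb hab hAB hCEt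
      have e1 : (calc2v f hA hC.transpose Kᴴ * K).trace
          = star x ⬝ᵥ (calc2 f hA hC).mulVec x := by
        rw [core f hA hC.transpose K, hx,
          calc2_congr f hA hC.transpose.transpose hA hC rfl (Matrix.transpose_transpose C)]
      have e2 : (calc2v f hB hE.transpose Kᴴ * K).trace
          = star x ⬝ᵥ (calc2 f hB hE).mulVec x := by
        rw [core f hB hE.transpose K, hx,
          calc2_congr f hB hE.transpose.transpose hB hE rfl (Matrix.transpose_transpose E)]
      have e3 : (calc2v f hAB hCEt Kᴴ * K).trace
          = star x ⬝ᵥ (calc2 f hAB hCE).mulVec x := by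
        rw [core f hAB hCEt K, hx,
          calc2_congr f hAB hCEt.transpose hAB hCE rfl (by
            rw [Matrix.transpose_add, Matrix.transpose_smul, Matrix.transpose_smul,
              Matrix.transpose_transpose, Matrix.transpose_transpose])]
      rw [e1, e2, e3] at hineq
      rw [quad_comb]
      exact sub_nonneg.mpr hineq
  · intro h K A B C E hA hB hC hE hdAC hdBE a b ha hb hab hAB hCE
    have hCEt : (a • Cᵀ + b • Eᵀ).IsHermitian := by
      rw [← Matrix.transpose_smul, ← Matrix.transpose_smul, ← Matrix.transpose_add]
      exact hCE.transpose
    have hPSD := h A B Cᵀ Eᵀ hA hB hC.transpose hE.transpose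
      (dom_transfer hdAC) (dom_transfer hdBE) a b ha hb hab hAB hCEt
    have hq := hPSD.dotProduct_mulVec_nonneg (vecOf K)
    rw [quad_comb] at hq
    have e1 : star (vecOf K) ⬝ᵥ (calc2 f hA hC.transpose).mulVec (vecOf K)
        = (calc2v f hA hC Kᴴ * K).trace := (core f hA hC K).symm
    have e2 : star (vecOf K) ⬝ᵥ (calc2 f hB hE.transpose).mulVec (vecOf K)
        = (calc2v f hB hE Kᴴ * K).trace := (core f hB hE K).symm
    have e3 : star (vecOf K) ⬝ᵥ (calc2 f hAB hCEt).mulVec (vecOf K)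
        = (calc2v f hAB hCE Kᴴ * K).trace := by
      rw [calc2_congr f hAB hCEt hAB hCE.transpose rfl (by
        rw [Matrix.transpose_add, Matrix.transpose_smul, Matrix.transpose_smul])]
      exact (core f hAB hCE K).symm
    rw [e1, e2, e3] at hq
    exact sub_nonneg.mp hq
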